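/- arXiv:1601.07580 — 10 statements merged into one kernel-verified Lean document; each statement's English description precedes it below -/
import Mathlib

section
/- Let λ ∈ ℂ, let u : ℝ → ℂ be differentiable, and let f₁, f₂ : ℝ → ℂ be differentiable functions satisfying f₁'(x) = -iλ f₁(x) + i u(x) f₂(x) and f₂'(x) = -i u(x) f₁(x) + iλ f₂(x) for all x ∈ ℝ. Then the function g := f₁ + i·f₂ is twice differentiable and satisfies -g''(x) + (u'(x) + u(x)²) g(x) = λ² g(x) for all x ∈ ℝ. -/
open Complex

theorem zs_to_hill_solution
    (lam : ℂ) (u f₁ f₂ : ℝ → ℂ)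
    (hu : Differentiable ℝ u)
    (hf₁ : ∀ x : ℝ, HasDerivAt f₁ (-I * lam * f₁ x + I * u x * f₂ x) x)
    (hf₂ : ∀ x : ℝ, HasDerivAt f₂ (-I * u x * f₁ x + I * lam * f₂ x) x) :
    let g : ℝ → ℂ := fun x => f₁ x + I * f₂ x
    (∀ x : ℝ, DifferentiableAt ℝ g x) ∧
    (∀ x : ℝ, DifferentiableAt ℝ (deriv g) x) ∧
    (∀ x : ℝ, -(deriv (deriv g) x) + (deriv u x + u x ^ 2) * g x = lam ^ 2 * g x) := by
  intro g
  set d : ℝ → ℂ := fun x =>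
    (-I * lam * f₁ x + I * u x * f₂ x) + I * (-I * u x * f₁ x + I * lam * f₂ x) with hd
  have hg : ∀ x, HasDerivAt g (d x) x := fun x =>
    ((hf₁ x).add ((hf₂ x).const_mul I))
  have hderiv : deriv g = d := funext fun x => (hg x).deriv
  have hd' : ∀ x, HasDerivAt d
      ((-I * lam * (-I * lam * f₁ x + I * u x * f₂ x)
        + (I * deriv u x * f₂ x + I * u x * (-I * u x * f₁ x + I * lam * f₂ x)))
       + I * (-I * deriv u x * f₁ x + -I * u x * (-I * lam * f₁ x + I * u x * f₂ x)
              + I * lam * (-I * u x * f₁ x + I * lam * f₂ x))) x := by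
    intro x
    have hu' : HasDerivAt u (deriv u x) x := (hu x).hasDerivAt
    have h1 := ((hf₁ x).const_mul (-I * lam)).add
      (((hu'.const_mul I).mul (hf₂ x)))
    have h2 := (((hu'.const_mul (-I)).mul (hf₁ x)).add ((hf₂ x).const_mul (I * lam))).const_mul I
    have := h1.add h2
    convert this using 1
    all_goals rfl
  refine ⟨fun x => (hg x).differentiableAt, ?_, ?_⟩
  · intro x
    rw [hderiv]
    exact (hd' x).differentiableAt
  · intro x
    rw [hderiv, (hd' x).deriv]
    simp only [g]
    linear_combination (I * (u x ^ 2 - lam ^ 2) * f₂ x + (deriv u x + u x ^ 2 - lam ^ 2) * f₁ x) * Complex.I_sq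
end

section
/- Let λ ∈ ℂ with λ ≠ 0 and let u : ℝ → ℂ be differentiable with continuous derivative. Let M be the fundamental solution of the ZS system at (λ, (u, u)) and let Y be the fundamental solution of the Hill equation with potential u' + u² at spectral parameter μ = λ². Define A(x) = !![1, i; u(x) - iλ, i·u(x) - λ]. Then A(0) is invertible and Y(x) = A(x) * M(x) * (A(0))⁻¹ for all x ∈ ℝ. -/
open Complex Matrix

/-- `M` is the fundamental solution of the Zakharov–Shabat system at `(lam, (p, q))`:
`M' = !![-i lam, i p; -i q, i lam] * M`, `M 0 = 1`. -/
def IsZSFund (lam : ℂ) (p q : ℝ → ℂ) (M : ℝ → Matrix (Fin 2) (Fin 2) ℂ) : Prop :=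
  M 0 = 1 ∧ ∀ (x : ℝ) (i j : Fin 2), HasDerivAt (fun t => M t i j)
    ((!![-I * lam, I * p x; -I * q x, I * lam] * M x) i j) x

/-- `Y` is the fundamental solution of the Hill equation with potential `v` at spectral
parameter `mu`: `Y' = !![0, 1; v - mu, 0] * Y`, `Y 0 = 1`. -/
def IsHillFund (mu : ℂ) (v : ℝ → ℂ) (Y : ℝ → Matrix (Fin 2) (Fin 2) ℂ) : Prop :=
  Y 0 = 1 ∧ ∀ (x : ℝ) (i j : Fin 2), HasDerivAt (fun t => Y t i j)
    ((!![0, 1; v x - mu, 0] * Y x) i j) x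

private lemma entry_deriv_mul {X Z : ℝ → Matrix (Fin 2) (Fin 2) ℂ}
    {X' Z' : Matrix (Fin 2) (Fin 2) ℂ} {x : ℝ}
    (hX : ∀ i j, HasDerivAt (fun t => X t i j) (X' i j) x)
    (hZ : ∀ i j, HasDerivAt (fun t => Z t i j) (Z' i j) x) (i j : Fin 2) :
    HasDerivAt (fun t => (X t * Z t) i j) ((X' * Z x + X x * Z') i j) x := by
  have h := (((hX i 0).mul (hZ 0 j)).add ((hX i 1).mul (hZ 1 j)))
  have he : (fun t => (X t * Z t) i j)
      = fun t => X t i 0 * Z t 0 j + X t i 1 * Z t 1 j := by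
    funext t; simp [Matrix.mul_apply, Fin.sum_univ_two]
  rw [he]
  refine HasDerivAt.congr_deriv h ?_
  rw [Matrix.add_apply, Matrix.mul_apply, Matrix.mul_apply, Fin.sum_univ_two, Fin.sum_univ_two]; ring

theorem zs_hill_fund_conjugate
    (lam : ℂ) (hlam : lam ≠ 0) (u : ℝ → ℂ) (hu : ContDiff ℝ 1 u)
    (M Y : ℝ → Matrix (Fin 2) (Fin 2) ℂ)
    (hM : IsZSFund lam u u M)
    (hY : IsHillFund (lam ^ 2) (fun x => deriv u x + u x ^ 2) Y)
    (A : ℝ → Matrix (Fin 2) (Fin 2) ℂ)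
    (hA : ∀ x : ℝ, A x = !![1, I; u x - I * lam, I * u x - lam]) :
    IsUnit (A 0) ∧ ∀ x : ℝ, Y x = A x * M x * (A 0)⁻¹ := by
  obtain ⟨hM0, hMd⟩ := hM
  obtain ⟨hY0, hYd⟩ := hY
  have hu' : ∀ x, HasDerivAt u (deriv u x) x :=
    fun x => (hu.differentiable one_ne_zero x).hasDerivAt
  -- determinant of A
  have hdetA : ∀ x, (A x).det = -2 * lam := by
    intro x
    rw [hA, Matrix.det_fin_two_of]
    linear_combination lam * Complex.I_sq
  have hUdet : IsUnit (A 0).det := by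
    rw [hdetA 0]
    exact isUnit_iff_ne_zero.mpr (by simpa using hlam)
  refine ⟨(Matrix.isUnit_iff_isUnit_det _).2 hUdet, ?_⟩
  set c : Matrix (Fin 2) (Fin 2) ℂ := (A 0)⁻¹ with hcdef
  set P : ℝ → Matrix (Fin 2) (Fin 2) ℂ := fun t => A t * M t * c with hPdef
  have hP0 : P 0 = 1 := by
    simp only [hPdef, hM0, Matrix.mul_one]
    exact Matrix.mul_nonsing_inv _ hUdet
  -- derivative of A entries
  have hAd : ∀ x (i j : Fin 2),
      HasDerivAt (fun t => A t i j) (!![0, 0; deriv u x, I * deriv u x] i j) x := by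
    intro x i j
    have he : (fun t => A t i j) = fun t => !![1, I; u t - I * lam, I * u t - lam] i j := by
      funext t; rw [hA]
    rw [he]
    fin_cases i <;> fin_cases j <;> simp only [Matrix.cons_val', Matrix.cons_val_zero,
      Matrix.cons_val_one, Matrix.head_cons, Matrix.empty_val', Matrix.cons_val_fin_one,
      Matrix.head_fin_const, Fin.mk_zero, Fin.mk_one, Fin.isValue]
    · exact hasDerivAt_const _ _
    · exact hasDerivAt_const _ _
    · exact (hu' x).sub_const _
    · exact (((hu' x).const_mul I).sub_const _)
  -- the key conjugation identity
  have key : ∀ x, !![0, 0; deriv u x, I * deriv u x]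
      + A x * !![-I * lam, I * u x; -I * u x, I * lam]
      = !![0, 1; deriv u x + u x ^ 2 - lam ^ 2, 0] * A x := by
    intro x
    rw [hA]
    ext i j
    fin_cases i <;> fin_cases j <;>
      simp [Matrix.mul_apply, Fin.sum_univ_two]
    all_goals first
      | linear_combination (-(u x)) * Complex.I_sq
      | linear_combination lam * Complex.I_sq
      | linear_combination (lam ^ 2 - u x ^ 2) * Complex.I_sq
      | linear_combination (deriv u x) * Complex.I_sq
      | linear_combination (-(deriv u x)) * Complex.I_sq
      | ring
  -- P satisfies the Hill ODE
  have hPd : ∀ x (i j : Fin 2), HasDerivAt (fun t => P t i j)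
      ((!![0, 1; deriv u x + u x ^ 2 - lam ^ 2, 0] * P x) i j) x := by
    intro x i j
    have h1 : ∀ i j : Fin 2, HasDerivAt (fun t => (A t * M t) i j)
        ((!![0, 0; deriv u x, I * deriv u x] * M x
          + A x * (!![-I * lam, I * u x; -I * u x, I * lam] * M x)) i j) x :=
      fun i j => entry_deriv_mul (hAd x) (fun i j => hMd x i j) i j
    have hc : ∀ i j : Fin 2, HasDerivAt (fun _ : ℝ => c i j)
        ((0 : Matrix (Fin 2) (Fin 2) ℂ) i j) x := by
      intro i j; simpa using hasDerivAt_const x (c i j)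
    have h2 := entry_deriv_mul h1 hc i j
    have hval : (!![0, 0; deriv u x, I * deriv u x] * M x
          + A x * (!![-I * lam, I * u x; -I * u x, I * lam] * M x)) * c
          + (A x * M x) * (0 : Matrix (Fin 2) (Fin 2) ℂ)
        = !![0, 1; deriv u x + u x ^ 2 - lam ^ 2, 0] * P x := by
      rw [Matrix.mul_zero, add_zero, ← Matrix.mul_assoc (A x), ← Matrix.add_mul, key x,
        hPdef]
      simp only [Matrix.mul_assoc]
    rw [hval] at h2
    exact h2
  -- determinant of M is constant 1
  have hdetM : ∀ x, M x 0 0 * M x 1 1 - M x 0 1 * M x 1 0 = 1 := by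
    have hfd : ∀ x, HasDerivAt
        (fun t => M t 0 0 * M t 1 1 - M t 0 1 * M t 1 0) 0 x := by
      intro x
      have h := ((hMd x 0 0).mul (hMd x 1 1)).sub ((hMd x 0 1).mul (hMd x 1 0))
      refine HasDerivAt.congr_deriv h ?_
      simp [Matrix.mul_apply, Fin.sum_univ_two]
      ring
    intro x
    have hconst := is_const_of_deriv_eq_zero
      (fun y => (hfd y).differentiableAt) (fun y => (hfd y).deriv) x 0
    rw [hconst, hM0]
    norm_num
  -- adjugate of P: entrywise derivative
  have hadjd : ∀ x (i j : Fin 2), HasDerivAt (fun t => (P t).adjugate i j)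
      ((!![0, 1; deriv u x + u x ^ 2 - lam ^ 2, 0] * P x).adjugate i j) x := by
    intro x i j
    have he : (fun t => (P t).adjugate i j)
        = fun t => !![P t 1 1, -P t 0 1; -P t 1 0, P t 0 0] i j := by
      funext t; rw [Matrix.adjugate_fin_two]
    rw [he, Matrix.adjugate_fin_two]
    fin_cases i <;> fin_cases j <;> simp only [Matrix.cons_val', Matrix.cons_val_zero,
      Matrix.cons_val_one, Matrix.head_cons, Matrix.empty_val', Matrix.cons_val_fin_one,
      Matrix.head_fin_const, Fin.mk_zero, Fin.mk_one, Fin.isValue]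
    · exact hPd x 1 1
    · exact (hPd x 0 1).neg
    · exact (hPd x 1 0).neg
    · exact hPd x 0 0
  -- adj(B) = -B
  have hadjB : ∀ w : ℂ, (!![0, 1; w, 0] : Matrix (Fin 2) (Fin 2) ℂ).adjugate
      = -(!![0, 1; w, 0]) := by
    intro w
    rw [Matrix.adjugate_fin_two]
    ext i j
    fin_cases i <;> fin_cases j <;> simp
  -- adj(P) * Y is constant = 1
  have hW : ∀ x, (P x).adjugate * Y x = 1 := by
    have hWd : ∀ x (i j : Fin 2),
        HasDerivAt (fun t => ((P t).adjugate * Y t) i j) 0 x := by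
      intro x i j
      have h := entry_deriv_mul (hadjd x) (fun i j => hYd x i j) i j
      have hval : (!![0, 1; deriv u x + u x ^ 2 - lam ^ 2, 0] * P x).adjugate * Y x
          + (P x).adjugate * (!![0, 1; deriv u x + u x ^ 2 - lam ^ 2, 0] * Y x)
          = 0 := by
        rw [Matrix.adjugate_mul_distrib, hadjB, Matrix.mul_neg, Matrix.neg_mul,
          ← Matrix.mul_assoc, neg_add_cancel]
      rw [hval] at h
      simpa using h
    intro x
    ext i j
    have hconst := is_const_of_deriv_eq_zero
      (f := fun t => ((P t).adjugate * Y t) i j)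
      (fun y => (hWd y i j).differentiableAt) (fun y => (hWd y i j).deriv) x 0
    rw [hconst, hP0, hY0]
    simp
  -- det P = 1
  have hdetP : ∀ x, (P x).det = 1 := by
    intro x
    have : (P x).det = (A x).det * (M x).det * c.det := by
      rw [hPdef]; simp [Matrix.det_mul]
    rw [this, hdetA, Matrix.det_fin_two (M x), hdetM x, hcdef, Matrix.det_nonsing_inv,
      hdetA 0, Ring.inverse_eq_inv']
    field_simp
  -- conclude
  intro x
  have h1 : (P x).adjugate * P x = 1 := by
    rw [Matrix.adjugate_mul, hdetP x, one_smul]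
  have h2 : P x * (P x).adjugate = 1 := mul_eq_one_comm.mp h1
  calc Y x = 1 * Y x := by rw [Matrix.one_mul]
    _ = P x * (P x).adjugate * Y x := by rw [h2]
    _ = P x * ((P x).adjugate * Y x) := by rw [Matrix.mul_assoc]
    _ = P x := by rw [hW x, Matrix.mul_one]
end

section
/- Let u : ℝ → ℂ be continuous and let M be the fundamental solution of the ZS system at (0, (u, u)) (spectral parameter λ = 0). Then trace(M(1)) = 2·cosh(∫₀¹ u(x) dx). -/
open Complex Matrix

theorem zs_discriminant_at_zero
    (u : ℝ → ℂ) (hu : Continuous u)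
    (M : ℝ → Matrix (Fin 2) (Fin 2) ℂ)
    (hM : IsZSFund 0 u u M) :
    (M 1).trace = 2 * Complex.cosh (∫ x in (0:ℝ)..1, u x) := by
  obtain ⟨hM0, hMd⟩ := hM
  set U : ℝ → ℂ := fun x => ∫ t in (0:ℝ)..x, u t with hUdef
  have hU : ∀ x : ℝ, HasDerivAt U (u x) x := fun x =>
    intervalIntegral.integral_hasDerivAt_right (hu.intervalIntegrable 0 x)
      (hu.stronglyMeasurableAtFilter _ _) hu.continuousAt
  have hc : ∀ x, HasDerivAt (fun t => Complex.cosh (U t)) (Complex.sinh (U x) * u x) x :=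
    fun x => (Complex.hasDerivAt_cosh (U x)).comp x (hU x)
  have hs : ∀ x, HasDerivAt (fun t => Complex.sinh (U t)) (Complex.cosh (U x) * u x) x :=
    fun x => (Complex.hasDerivAt_sinh (U x)).comp x (hU x)
  -- entrywise derivatives of M
  have h00 : ∀ x, HasDerivAt (fun t => M t 0 0) (I * u x * M x 1 0) x := by
    intro x
    have h := hMd x 0 0
    have e : (!![-I * (0:ℂ), I * u x; -I * u x, I * 0] * M x) 0 0 = I * u x * M x 1 0 := by
      simp [Matrix.mul_apply, Fin.sum_univ_two]
    rwa [e] at h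
  have h01 : ∀ x, HasDerivAt (fun t => M t 0 1) (I * u x * M x 1 1) x := by
    intro x
    have h := hMd x 0 1
    have e : (!![-I * (0:ℂ), I * u x; -I * u x, I * 0] * M x) 0 1 = I * u x * M x 1 1 := by
      simp [Matrix.mul_apply, Fin.sum_univ_two]
    rwa [e] at h
  have h10 : ∀ x, HasDerivAt (fun t => M t 1 0) (-(I * u x * M x 0 0)) x := by
    intro x
    have h := hMd x 1 0
    have e : (!![-I * (0:ℂ), I * u x; -I * u x, I * 0] * M x) 1 0 = -(I * u x * M x 0 0) := by
      simp [Matrix.mul_apply, Fin.sum_univ_two]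
    rwa [e] at h
  have h11 : ∀ x, HasDerivAt (fun t => M t 1 1) (-(I * u x * M x 0 1)) x := by
    intro x
    have h := hMd x 1 1
    have e : (!![-I * (0:ℂ), I * u x; -I * u x, I * 0] * M x) 1 1 = -(I * u x * M x 0 1) := by
      simp [Matrix.mul_apply, Fin.sum_univ_two]
    rwa [e] at h
  -- constancy helper
  have key : ∀ f : ℝ → ℂ, (∀ x, HasDerivAt f 0 x) → f 1 = f 0 := by
    intro f hf
    exact is_const_of_deriv_eq_zero (fun x => (hf x).differentiableAt)
      (fun x => (hf x).deriv) 1 0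
  have hU0 : U 0 = 0 := by simp [hUdef]
  have hM000 : M 0 0 0 = 1 := by rw [hM0]; simp
  have hM001 : M 0 0 1 = 0 := by rw [hM0]; simp [Matrix.one_apply]
  have hM010 : M 0 1 0 = 0 := by rw [hM0]; simp [Matrix.one_apply]
  have hM011 : M 0 1 1 = 1 := by rw [hM0]; simp
  -- four conserved quantities
  have e1 : Complex.cosh (U 1) * M 1 0 0 - I * Complex.sinh (U 1) * M 1 1 0 = 1 := by
    have hA : ∀ x, HasDerivAt
        (fun t => Complex.cosh (U t) * M t 0 0 - I * Complex.sinh (U t) * M t 1 0) 0 x := by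
      intro x
      have h := ((hc x).mul (h00 x)).sub (((hs x).const_mul I).mul (h10 x))
      refine h.congr_deriv (Eq.symm ?_)
      linear_combination (-(Complex.sinh (U x) * u x * M x 0 0)) * Complex.I_mul_I
    have := key _ hA
    simpa [hU0, hM000, hM010] using this
  have e2 : Complex.cosh (U 1) * M 1 0 1 - I * Complex.sinh (U 1) * M 1 1 1 = 0 := by
    have hA : ∀ x, HasDerivAt
        (fun t => Complex.cosh (U t) * M t 0 1 - I * Complex.sinh (U t) * M t 1 1) 0 x := by
      intro x
      have h := ((hc x).mul (h01 x)).sub (((hs x).const_mul I).mul (h11 x))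
      refine h.congr_deriv (Eq.symm ?_)
      linear_combination (-(Complex.sinh (U x) * u x * M x 0 1)) * Complex.I_mul_I
    have := key _ hA
    simpa [hU0, hM001, hM011] using this
  have e3 : I * Complex.sinh (U 1) * M 1 0 0 + Complex.cosh (U 1) * M 1 1 0 = 0 := by
    have hA : ∀ x, HasDerivAt
        (fun t => I * Complex.sinh (U t) * M t 0 0 + Complex.cosh (U t) * M t 1 0) 0 x := by
      intro x
      have h := (((hs x).const_mul I).mul (h00 x)).add ((hc x).mul (h10 x))
      refine h.congr_deriv (Eq.symm ?_)
      linear_combination (-(Complex.sinh (U x) * u x * M x 1 0)) * Complex.I_mul_I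
    have := key _ hA
    simpa [hU0, hM000, hM010] using this
  have e4 : I * Complex.sinh (U 1) * M 1 0 1 + Complex.cosh (U 1) * M 1 1 1 = 1 := by
    have hA : ∀ x, HasDerivAt
        (fun t => I * Complex.sinh (U t) * M t 0 1 + Complex.cosh (U t) * M t 1 1) 0 x := by
      intro x
      have h := (((hs x).const_mul I).mul (h01 x)).add ((hc x).mul (h11 x))
      refine h.congr_deriv (Eq.symm ?_)
      linear_combination (-(Complex.sinh (U x) * u x * M x 1 1)) * Complex.I_mul_I
    have := key _ hA
    simpa [hU0, hM001, hM011] using this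
  have hpy := Complex.cosh_sq_sub_sinh_sq (U 1)
  have htr : (M 1).trace = M 1 0 0 + M 1 1 1 := by
    simp [Matrix.trace, Fin.sum_univ_two]
  rw [htr]
  show M 1 0 0 + M 1 1 1 = 2 * Complex.cosh (U 1)
  linear_combination Complex.cosh (U 1) * e1 + (I * Complex.sinh (U 1)) * e3 +
    Complex.cosh (U 1) * e4 - (I * Complex.sinh (U 1)) * e2 +
    (-(M 1 0 0 + M 1 1 1)) * hpy - (M 1 0 0 + M 1 1 1) * Complex.I_mul_I *
      (Complex.sinh (U 1) * Complex.sinh (U 1))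
end

section
/- Let λ ∈ ℂ with λ ≠ 0 and let u : ℝ → ℂ be differentiable with continuous derivative and 1-periodic (u(x+1) = u(x) for all x). Then the following are equivalent: (a) there exist differentiable f₁, f₂ : ℝ → ℂ, not both identically zero, with f₁'(x) = -iλ f₁(x) + i u(x) f₂(x), f₂'(x) = -i u(x) f₁(x) + iλ f₂(x), f₁(x+2) = f₁(x), and f₂(x+2) = f₂(x) for all x ∈ ℝ; (b) there exists a twice differentiable g : ℝ → ℂ, not identically zero, with -g''(x) + (u'(x) + u(x)²) g(x) = λ² g(x) and g(x+2) = g(x) for all x ∈ ℝ. -/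
open Complex

theorem zs_hill_periodic_eigenvalue_iff
    (lam : ℂ) (hlam : lam ≠ 0) (u : ℝ → ℂ)
    (hu : ContDiff ℝ 1 u) (hper : ∀ x : ℝ, u (x + 1) = u x) :
    (∃ f₁ f₂ : ℝ → ℂ,
      (∀ x : ℝ, HasDerivAt f₁ (-I * lam * f₁ x + I * u x * f₂ x) x) ∧
      (∀ x : ℝ, HasDerivAt f₂ (-I * u x * f₁ x + I * lam * f₂ x) x) ∧
      (∀ x : ℝ, f₁ (x + 2) = f₁ x) ∧
      (∀ x : ℝ, f₂ (x + 2) = f₂ x) ∧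
      ¬(f₁ = 0 ∧ f₂ = 0)) ↔
    (∃ g : ℝ → ℂ,
      (∀ x : ℝ, DifferentiableAt ℝ g x) ∧
      (∀ x : ℝ, DifferentiableAt ℝ (deriv g) x) ∧
      (∀ x : ℝ, -(deriv (deriv g) x) + (deriv u x + u x ^ 2) * g x = lam ^ 2 * g x) ∧
      (∀ x : ℝ, g (x + 2) = g x) ∧
      g ≠ 0) := by
  have hud : ∀ x : ℝ, HasDerivAt u (deriv u x) x := fun x =>
    ((hu.differentiable one_ne_zero) x).hasDerivAt
  have huper2 : ∀ x : ℝ, u (x + 2) = u x := by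
    intro x
    have h1 := hper (x + 1)
    have h2 := hper x
    have : x + 2 = x + 1 + 1 := by ring
    rw [this, h1, h2]
  constructor
  · rintro ⟨f₁, f₂, hf₁, hf₂, hp₁, hp₂, hne⟩
    set g : ℝ → ℂ := fun x => (f₁ x + I * f₂ x) / 2 with hgdef
    set h : ℝ → ℂ := fun x => (I * f₁ x + f₂ x) / 2 with hhdef
    have hg : ∀ x, HasDerivAt g (u x * g x - lam * h x) x := by
      intro x
      have hd := ((hf₁ x).add ((hf₂ x).const_mul I)).div_const 2
      refine hd.congr_deriv (Eq.symm ?_)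
      simp only [hgdef, hhdef]
      linear_combination ((u x * f₁ x - lam * f₂ x) / 2) * Complex.I_sq
    have hh : ∀ x, HasDerivAt h (lam * g x - u x * h x) x := by
      intro x
      have hd := (((hf₁ x).const_mul I).add (hf₂ x)).div_const 2
      refine hd.congr_deriv (Eq.symm ?_)
      simp only [hgdef, hhdef]
      linear_combination ((lam * f₁ x - u x * f₂ x) / 2) * Complex.I_sq
    have hderivg : ∀ x, deriv g x = u x * g x - lam * h x := fun x => (hg x).deriv
    have hdg : ∀ x, DifferentiableAt ℝ g x := fun x => (hg x).differentiableAt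
    have hderivg_eq : deriv g = fun x => u x * g x - lam * h x := funext hderivg
    have hg2 : ∀ x, HasDerivAt (deriv g)
        (deriv u x * g x + u x * (u x * g x - lam * h x)
          - lam * (lam * g x - u x * h x)) x := by
      intro x
      rw [hderivg_eq]
      exact ((hud x).mul (hg x)).sub ((hh x).const_mul lam)
    refine ⟨g, hdg, fun x => (hg2 x).differentiableAt, ?_, ?_, ?_⟩
    · intro x
      rw [(hg2 x).deriv]
      ring
    · intro x
      simp only [hgdef, hp₁ x, hp₂ x]
    · intro hg0
      apply hne
      have hh0 : ∀ x, h x = 0 := by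
        intro x
        have h1 : deriv g x = 0 := by rw [hg0]; exact deriv_const x 0
        have h2 := hderivg x
        rw [h1, hg0] at h2
        simp only [Pi.zero_apply, mul_zero, zero_sub] at h2
        have h3 : lam * h x = 0 := by linear_combination h2
        exact (mul_eq_zero.mp h3).resolve_left hlam
      constructor
      · funext x
        have e1 : (f₁ x + I * f₂ x) / 2 = 0 := by
          have := congrFun hg0 x
          simpa [hgdef] using this
        have e2 : (I * f₁ x + f₂ x) / 2 = 0 := by
          have := hh0 x
          simpa [hhdef] using this
        simp only [Pi.zero_apply]
        linear_combination e1 - I * e2 + (f₁ x / 2) * Complex.I_sq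
      · funext x
        have e1 : (f₁ x + I * f₂ x) / 2 = 0 := by
          have := congrFun hg0 x
          simpa [hgdef] using this
        have e2 : (I * f₁ x + f₂ x) / 2 = 0 := by
          have := hh0 x
          simpa [hhdef] using this
        simp only [Pi.zero_apply]
        linear_combination e2 - I * e1 + (f₂ x / 2) * Complex.I_sq
  · rintro ⟨g, hdg, hdg', heq, hper2, hgne⟩
    have hgd : ∀ x, HasDerivAt g (deriv g x) x := fun x => (hdg x).hasDerivAt
    have hgd2 : ∀ x, HasDerivAt (deriv g) (deriv (deriv g) x) x :=
      fun x => (hdg' x).hasDerivAt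
    set h : ℝ → ℂ := fun x => (u x * g x - deriv g x) / lam with hhdef
    have hderivg : ∀ x, deriv g x = u x * g x - lam * h x := by
      intro x
      simp only [hhdef]
      field_simp
      ring
    have hh : ∀ x, HasDerivAt h (lam * g x - u x * h x) x := by
      intro x
      have hd := (((hud x).mul (hgd x)).sub (hgd2 x)).div_const lam
      refine hd.congr_deriv (Eq.symm ?_)
      have hgg : deriv (deriv g) x = (deriv u x + u x ^ 2) * g x - lam ^ 2 * g x := by
        linear_combination -heq x
      rw [hgg]
      simp only [hhdef]
      field_simp
      ring
    have hderper : ∀ x : ℝ, deriv g (x + 2) = deriv g x := by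
      intro x
      have hgeq : (fun y : ℝ => g (y + 2)) = g := funext hper2
      have := deriv_comp_add_const g (2 : ℝ) x
      rw [hgeq] at this
      exact this.symm
    refine ⟨fun x => g x - I * h x, fun x => h x - I * g x, ?_, ?_, ?_, ?_, ?_⟩
    · intro x
      have hd := (hgd x).sub ((hh x).const_mul I)
      refine hd.congr_deriv (Eq.symm ?_)
      rw [hderivg x]
      linear_combination (lam * h x - u x * g x) * Complex.I_sq
    · intro x
      have hd := (hh x).sub ((hgd x).const_mul I)
      refine hd.congr_deriv (Eq.symm ?_)
      rw [hderivg x]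
      linear_combination (u x * h x - lam * g x) * Complex.I_sq
    · intro x
      simp only [hhdef, huper2 x, hper2 x, hderper x]
    · intro x
      simp only [hhdef, huper2 x, hper2 x, hderper x]
    · rintro ⟨h1, h2⟩
      apply hgne
      funext x
      have e1 : g x - I * h x = 0 := congrFun h1 x
      have e2 : h x - I * g x = 0 := congrFun h2 x
      simp only [Pi.zero_apply]
      linear_combination (e1 + I * e2) / 2 + (g x / 2) * Complex.I_sq
end

section
/- Let λ ∈ ℂ, α ∈ ℝ, and let φ₋, φ₊ : ℝ → ℂ be continuous. Let M be the fundamental solution of the ZS system at (λ, (φ₋, φ₊)) and let N be the fundamental solution of the ZS system at (λ, (e^{iα}·φ₋, e^{-iα}·φ₊)). Then N(x) = R * M(x) * R⁻¹ for all x ∈ ℝ, where R = !![e^{iα/2}, 0; 0, e^{-iα/2}]. -/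
open Complex Matrix

private lemma const_of_zero_deriv {g : ℝ → ℂ} (h : ∀ x, HasDerivAt g 0 x) (x : ℝ) :
    g x = g 0 :=
  is_const_of_deriv_eq_zero (fun t => (h t).differentiableAt) (fun t => (h t).deriv) x 0

private lemma zs_uniq (lam : ℂ) (p q : ℝ → ℂ) (M P : ℝ → Matrix (Fin 2) (Fin 2) ℂ)
    (hM0 : M 0 = 1)
    (hM : ∀ (x : ℝ) (i j : Fin 2), HasDerivAt (fun t => M t i j)
      ((!![-I * lam, I * p x; -I * q x, I * lam] * M x) i j) x)
    (hP0 : P 0 = 1)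
    (hP : ∀ (x : ℝ) (i j : Fin 2), HasDerivAt (fun t => P t i j)
      ((!![-I * lam, I * p x; -I * q x, I * lam] * P x) i j) x) :
    ∀ x, P x = M x := by
  have m : ∀ (x : ℝ) (i j : Fin 2), HasDerivAt (fun t => M t i j)
      (!![-I * lam, I * p x; -I * q x, I * lam] i 0 * M x 0 j
        + !![-I * lam, I * p x; -I * q x, I * lam] i 1 * M x 1 j) x := by
    intro x i j
    simpa [Matrix.mul_apply, Fin.sum_univ_two] using hM x i j
  have pd : ∀ (x : ℝ) (i j : Fin 2), HasDerivAt (fun t => P t i j)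
      (!![-I * lam, I * p x; -I * q x, I * lam] i 0 * P x 0 j
        + !![-I * lam, I * p x; -I * q x, I * lam] i 1 * P x 1 j) x := by
    intro x i j
    simpa [Matrix.mul_apply, Fin.sum_univ_two] using hP x i j
  have hdet : ∀ x, M x 0 0 * M x 1 1 - M x 0 1 * M x 1 0 = 1 := by
    have hg : ∀ x, HasDerivAt (fun t => M t 0 0 * M t 1 1 - M t 0 1 * M t 1 0) 0 x := by
      intro x
      have h := ((m x 0 0).fun_mul (m x 1 1)).fun_sub ((m x 0 1).fun_mul (m x 1 0))
      convert h using 1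
      · rfl
      simp
      ring
    intro x
    have := const_of_zero_deriv hg x
    simpa [hM0, Matrix.one_apply] using this
  have hF : ∀ (j : Fin 2) (x : ℝ),
      M x 1 1 * P x 0 j - M x 0 1 * P x 1 j = (1 : Matrix (Fin 2) (Fin 2) ℂ) 0 j ∧
      M x 0 0 * P x 1 j - M x 1 0 * P x 0 j = (1 : Matrix (Fin 2) (Fin 2) ℂ) 1 j := by
    intro j x
    constructor
    · have hg : ∀ x, HasDerivAt (fun t => M t 1 1 * P t 0 j - M t 0 1 * P t 1 j) 0 x := by
        intro x
        have h := ((m x 1 1).fun_mul (pd x 0 j)).fun_sub ((m x 0 1).fun_mul (pd x 1 j))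
        convert h using 1
        · rfl
        simp
        ring
      have := const_of_zero_deriv hg x
      rw [this, hM0, hP0]
      fin_cases j <;> simp
    · have hg : ∀ x, HasDerivAt (fun t => M t 0 0 * P t 1 j - M t 1 0 * P t 0 j) 0 x := by
        intro x
        have h := ((m x 0 0).fun_mul (pd x 1 j)).fun_sub ((m x 1 0).fun_mul (pd x 0 j))
        convert h using 1
        · rfl
        simp
        ring
      have := const_of_zero_deriv hg x
      rw [this, hM0, hP0]
      fin_cases j <;> simp
  intro x
  have h00 := (hF 0 x).1
  have h01 := (hF 1 x).1
  have h10 := (hF 0 x).2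
  have h11 := (hF 1 x).2
  simp [Matrix.one_apply] at h00 h01 h10 h11
  have hKP : adjugate (M x) * P x = 1 := by
    rw [Matrix.adjugate_fin_two]
    ext i j
    fin_cases i <;> fin_cases j <;>
      simp [Matrix.mul_apply, Fin.sum_univ_two, Matrix.one_apply] <;>
      [linear_combination h00; linear_combination h01;
       linear_combination h10; linear_combination h11]
  have h1 : M x * adjugate (M x) = 1 := by
    rw [Matrix.mul_adjugate]
    have hd : det (M x) = 1 := by rw [Matrix.det_fin_two]; exact hdet x
    rw [hd, one_smul]
  calc P x = (M x * adjugate (M x)) * P x := by rw [h1, one_mul]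
    _ = M x * (adjugate (M x) * P x) := by rw [Matrix.mul_assoc]
    _ = M x := by rw [hKP, mul_one]

theorem zs_fund_R_symmetry
    (lam : ℂ) (α : ℝ) (φm φp : ℝ → ℂ) (hm : Continuous φm) (hp : Continuous φp)
    (M N : ℝ → Matrix (Fin 2) (Fin 2) ℂ)
    (hM : IsZSFund lam φm φp M)
    (hN : IsZSFund lam (fun x => Complex.exp (I * α) * φm x)
                       (fun x => Complex.exp (-(I * α)) * φp x) N) :
    ∀ x : ℝ, N x =
      !![Complex.exp (I * α / 2), 0; 0, Complex.exp (-(I * α / 2))] * M x *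
        (!![Complex.exp (I * α / 2), 0; 0, Complex.exp (-(I * α / 2))] :
          Matrix (Fin 2) (Fin 2) ℂ)⁻¹ := by
  set e : ℂ := Complex.exp (I * ↑α / 2) with hedef
  have hene : e ≠ 0 := Complex.exp_ne_zero _
  have hf : Complex.exp (-(I * ↑α / 2)) = e⁻¹ := by rw [hedef, ← Complex.exp_neg]
  have hee : Complex.exp (I * ↑α) = e * e := by
    rw [hedef, ← Complex.exp_add]; ring_nf
  have hff : Complex.exp (-(I * ↑α)) = e⁻¹ * e⁻¹ := by
    rw [hedef, ← Complex.exp_neg, ← Complex.exp_add]; ring_nf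
  set R : Matrix (Fin 2) (Fin 2) ℂ := !![e, 0; 0, e⁻¹] with hR
  set Ri : Matrix (Fin 2) (Fin 2) ℂ := !![e⁻¹, 0; 0, e] with hRi
  have hRRi : R * Ri = 1 := by
    ext i j
    fin_cases i <;> fin_cases j <;>
      simp [hR, hRi, Matrix.mul_apply, Fin.sum_univ_two, Matrix.one_apply, hene]
  set P : ℝ → Matrix (Fin 2) (Fin 2) ℂ := fun t => Ri * N t * R with hPdef
  have hP0 : P 0 = 1 := by
    have hRiR : Ri * R = 1 := by
      ext i j
      fin_cases i <;> fin_cases j <;>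
        simp [hR, hRi, Matrix.mul_apply, Fin.sum_univ_two, Matrix.one_apply, hene]
    simp [hPdef, hN.1, hRiR]
  have hPentry : ∀ (t : ℝ) (i j : Fin 2),
      P t i j = !![e⁻¹, 0; 0, e] i i * N t i j * !![e, 0; 0, e⁻¹] j j := by
    intro t i j
    fin_cases i <;> fin_cases j <;>
      simp [hPdef, hR, hRi, Matrix.mul_apply, Matrix.vecMul, dotProduct,
        Fin.sum_univ_two] <;> ring
  have hPd : ∀ (x : ℝ) (i j : Fin 2), HasDerivAt (fun t => P t i j)
      ((!![-I * lam, I * φm x; -I * φp x, I * lam] * P x) i j) x := by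
    intro x i j
    have hN' := hN.2 x i j
    have base : HasDerivAt (fun t => P t i j)
        (!![e⁻¹, 0; 0, e] i i *
          ((!![-I * lam, I * (Complex.exp (I * ↑α) * φm x);
              -I * (Complex.exp (-(I * ↑α)) * φp x), I * lam] * N x) i j) *
          !![e, 0; 0, e⁻¹] j j) x := by
      have hder := (hN'.const_mul (!![e⁻¹, 0; 0, e] i i)).mul_const (!![e, 0; 0, e⁻¹] j j)
      exact hder.congr_of_eventuallyEq (Filter.Eventually.of_forall fun t => hPentry t i j)
    convert base using 1
    fin_cases i <;> fin_cases j <;>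
      simp [Matrix.mul_apply, Fin.sum_univ_two, hPentry, hee, hff] <;>
      field_simp <;> ring
  have key := zs_uniq lam φm φp M P hM.1 hM.2 hP0 hPd
  intro x
  have hPx : Ri * N x * R = M x := key x
  have hNx : N x = R * M x * Ri := by
    have := congrArg (fun Z => R * Z * Ri) hPx
    simpa [Matrix.mul_assoc, hRRi,
      show R * (Ri * N x) = N x by rw [← Matrix.mul_assoc, hRRi, one_mul]] using this
  have hinv : R⁻¹ = Ri := Matrix.inv_eq_right_inv hRRi
  rw [hf]
  rw [← hinv] at hNx
  exact hNx
end

section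
/- Let λ ∈ ℂ and let φ₋, φ₊ : ℝ → ℂ be continuous. Let M be the fundamental solution of the ZS system at (λ, (φ₋, φ₊)) and let N be the fundamental solution of the ZS system at (-λ, (x ↦ φ₋(1-x), x ↦ φ₊(1-x))). Then M(1) is invertible and N(x) = P * J * M(1-x) * (M(1))⁻¹ * J⁻¹ * P for all x ∈ ℝ, where P = !![0, 1; 1, 0] and J = !![0, 1; -1, 0]. -/
open Complex Matrix

private lemma zs_const (f : ℝ → ℂ) (h : ∀ x, HasDerivAt f 0 x) (x : ℝ) : f x = f 0 :=
  is_const_of_deriv_eq_zero (fun x => (h x).differentiableAt) (fun x => (h x).deriv) x 0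

private lemma zs_det_one {lam : ℂ} {p q : ℝ → ℂ} {M : ℝ → Matrix (Fin 2) (Fin 2) ℂ}
    (h : IsZSFund lam p q M) (x : ℝ) :
    M x 0 0 * M x 1 1 - M x 0 1 * M x 1 0 = 1 := by
  have key : ∀ x, HasDerivAt (fun t => M t 0 0 * M t 1 1 - M t 0 1 * M t 1 0) 0 x := by
    intro x
    have h00 := h.2 x 0 0
    have h01 := h.2 x 0 1
    have h10 := h.2 x 1 0
    have h11 := h.2 x 1 1
    simp only [Matrix.mul_apply, Fin.sum_univ_two, Matrix.of_apply, Matrix.cons_val',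
      Matrix.cons_val_zero, Matrix.cons_val_one, Matrix.head_cons, Matrix.head_fin_const,
      Matrix.empty_val', Matrix.cons_val_fin_one] at h00 h01 h10 h11
    have hd := (h00.fun_mul h11).fun_sub (h01.fun_mul h10)
    exact hd.congr_deriv (by ring)
  rw [zs_const _ key x]
  simp [h.1, Matrix.one_apply]

theorem zs_fund_T_symmetry
    (lam : ℂ) (φm φp : ℝ → ℂ) (hm : Continuous φm) (hp : Continuous φp)
    (M N : ℝ → Matrix (Fin 2) (Fin 2) ℂ)
    (hM : IsZSFund lam φm φp M)
    (hN : IsZSFund (-lam) (fun x => φm (1 - x)) (fun x => φp (1 - x)) N) :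
    IsUnit (M 1) ∧
    ∀ x : ℝ, N x = !![0, 1; 1, 0] * !![0, 1; -1, 0] * M (1 - x) * (M 1)⁻¹ *
      (!![0, 1; -1, 0] : Matrix (Fin 2) (Fin 2) ℂ)⁻¹ * !![0, 1; 1, 0] := by
  have hdet : ∀ x, M x 0 0 * M x 1 1 - M x 0 1 * M x 1 0 = 1 := zs_det_one hM
  have hdet1 : det (M 1) = 1 := by rw [Matrix.det_fin_two]; exact hdet 1
  have hunit : IsUnit (M 1) := (Matrix.isUnit_iff_isUnit_det _).2 (by rw [hdet1]; exact isUnit_one)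
  refine ⟨hunit, fun x => ?_⟩
  have hMinv : (M 1)⁻¹ = !![M 1 1 1, -(M 1 0 1); -(M 1 1 0), M 1 0 0] := by
    rw [Matrix.inv_def, hdet1, Matrix.adjugate_fin_two]
    simp
  have hJ : (!![0, 1; -1, 0] : Matrix (Fin 2) (Fin 2) ℂ)⁻¹ = !![0, -1; 1, 0] := by
    apply Matrix.inv_eq_right_inv
    ext i j
    fin_cases i <;> fin_cases j <;>
      simp [Matrix.mul_apply, Fin.sum_univ_two, Matrix.one_apply]
  -- derivative of entries of `M (1 - t)`
  have hG : ∀ (t : ℝ) (i j : Fin 2), HasDerivAt (fun t : ℝ => M (1 - t) i j)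
      (-((!![-I * lam, I * φm (1 - t); -I * φp (1 - t), I * lam] * M (1 - t)) i j)) t :=
    fun t i j => HasDerivAt.comp_const_sub 1 t (hM.2 (1 - t) i j)
  -- four conserved quantities
  have key1 : ∀ t, HasDerivAt
      (fun t => -(M (1 - t) 1 1 * N t 0 0) - M (1 - t) 0 1 * N t 1 0) 0 t := by
    intro t
    have g01 := hG t 0 1
    have g11 := hG t 1 1
    have n00 := hN.2 t 0 0
    have n10 := hN.2 t 1 0
    simp only [Matrix.mul_apply, Fin.sum_univ_two, Matrix.of_apply, Matrix.cons_val',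
      Matrix.cons_val_zero, Matrix.cons_val_one, Matrix.head_cons, Matrix.head_fin_const,
      Matrix.empty_val', Matrix.cons_val_fin_one] at g01 g11 n00 n10
    have hd := ((g11.fun_mul n00).fun_neg).fun_sub (g01.fun_mul n10)
    exact hd.congr_deriv (by ring)
  have key2 : ∀ t, HasDerivAt
      (fun t => -(M (1 - t) 1 1 * N t 0 1) - M (1 - t) 0 1 * N t 1 1) 0 t := by
    intro t
    have g01 := hG t 0 1
    have g11 := hG t 1 1
    have n01 := hN.2 t 0 1
    have n11 := hN.2 t 1 1
    simp only [Matrix.mul_apply, Fin.sum_univ_two, Matrix.of_apply, Matrix.cons_val',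
      Matrix.cons_val_zero, Matrix.cons_val_one, Matrix.head_cons, Matrix.head_fin_const,
      Matrix.empty_val', Matrix.cons_val_fin_one] at g01 g11 n01 n11
    have hd := ((g11.fun_mul n01).fun_neg).fun_sub (g01.fun_mul n11)
    exact hd.congr_deriv (by ring)
  have key3 : ∀ t, HasDerivAt
      (fun t => M (1 - t) 1 0 * N t 0 0 + M (1 - t) 0 0 * N t 1 0) 0 t := by
    intro t
    have g00 := hG t 0 0
    have g10 := hG t 1 0
    have n00 := hN.2 t 0 0
    have n10 := hN.2 t 1 0
    simp only [Matrix.mul_apply, Fin.sum_univ_two, Matrix.of_apply, Matrix.cons_val',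
      Matrix.cons_val_zero, Matrix.cons_val_one, Matrix.head_cons, Matrix.head_fin_const,
      Matrix.empty_val', Matrix.cons_val_fin_one] at g00 g10 n00 n10
    have hd := (g10.fun_mul n00).fun_add (g00.fun_mul n10)
    exact hd.congr_deriv (by ring)
  have key4 : ∀ t, HasDerivAt
      (fun t => M (1 - t) 1 0 * N t 0 1 + M (1 - t) 0 0 * N t 1 1) 0 t := by
    intro t
    have g00 := hG t 0 0
    have g10 := hG t 1 0
    have n01 := hN.2 t 0 1
    have n11 := hN.2 t 1 1
    simp only [Matrix.mul_apply, Fin.sum_univ_two, Matrix.of_apply, Matrix.cons_val',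
      Matrix.cons_val_zero, Matrix.cons_val_one, Matrix.head_cons, Matrix.head_fin_const,
      Matrix.empty_val', Matrix.cons_val_fin_one] at g00 g10 n01 n11
    have hd := (g10.fun_mul n01).fun_add (g00.fun_mul n11)
    exact hd.congr_deriv (by ring)
  have eq1 : -(M (1 - x) 1 1 * N x 0 0) - M (1 - x) 0 1 * N x 1 0 = -(M 1 1 1) := by
    have h := zs_const _ key1 x
    simpa [hN.1, Matrix.one_apply] using h
  have eq2 : -(M (1 - x) 1 1 * N x 0 1) - M (1 - x) 0 1 * N x 1 1 = -(M 1 0 1) := by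
    have h := zs_const _ key2 x
    simpa [hN.1, Matrix.one_apply] using h
  have eq3 : M (1 - x) 1 0 * N x 0 0 + M (1 - x) 0 0 * N x 1 0 = M 1 1 0 := by
    have h := zs_const _ key3 x
    simpa [hN.1, Matrix.one_apply] using h
  have eq4 : M (1 - x) 1 0 * N x 0 1 + M (1 - x) 0 0 * N x 1 1 = M 1 0 0 := by
    have h := zs_const _ key4 x
    simpa [hN.1, Matrix.one_apply] using h
  have detx := hdet (1 - x)
  have hn00 : N x 0 0 = M (1 - x) 0 0 * M 1 1 1 - M (1 - x) 0 1 * M 1 1 0 := by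
    linear_combination (-(M (1 - x) 0 0)) * eq1 + (-(M (1 - x) 0 1)) * eq3 +
      (-(N x 0 0)) * detx
  have hn01 : N x 0 1 = M (1 - x) 0 0 * M 1 0 1 - M (1 - x) 0 1 * M 1 0 0 := by
    linear_combination (-(M (1 - x) 0 0)) * eq2 + (-(M (1 - x) 0 1)) * eq4 +
      (-(N x 0 1)) * detx
  have hn10 : N x 1 0 = M (1 - x) 1 1 * M 1 1 0 - M (1 - x) 1 0 * M 1 1 1 := by
    linear_combination (M (1 - x) 1 0) * eq1 + (M (1 - x) 1 1) * eq3 + (-(N x 1 0)) * detx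
  have hn11 : N x 1 1 = M (1 - x) 1 1 * M 1 0 0 - M (1 - x) 1 0 * M 1 0 1 := by
    linear_combination (M (1 - x) 1 0) * eq2 + (M (1 - x) 1 1) * eq4 + (-(N x 1 1)) * detx
  rw [hMinv, hJ]
  ext i j
  fin_cases i <;> fin_cases j <;>
    simp only [Matrix.mul_apply, Fin.sum_univ_two, Matrix.of_apply, Matrix.cons_val',
      Matrix.cons_val_zero, Matrix.cons_val_one, Matrix.head_cons, Matrix.head_fin_const,
      Matrix.empty_val', Matrix.cons_val_fin_one, Fin.mk_zero, Fin.mk_one, Fin.isValue] <;>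
    [linear_combination hn00; linear_combination hn01; linear_combination hn10;
      linear_combination hn11]
end

section
/- Let λ ∈ ℂ, α ∈ ℝ, and let φ₋, φ₊ : ℝ → ℂ be continuous. Let M, N_P, N_R, N_T be the fundamental solutions of the ZS system at, respectively, (λ, (φ₋, φ₊)), (-λ, (φ₊, φ₋)), (λ, (e^{iα}·φ₋, e^{-iα}·φ₊)), and (-λ, (x ↦ φ₋(1-x), x ↦ φ₊(1-x))). Then trace(N_P(1)) = trace(M(1)), trace(N_R(1)) = trace(M(1)), and trace(N_T(1)) = trace(M(1)); that is, the discriminant satisfies Δ(λ, φ) = Δ(-λ, Pφ) = Δ(λ, R_αφ) = Δ(-λ, Tφ). -/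
open Complex Matrix

/-- Entrywise product rule for 2×2 matrix-valued functions. -/
lemma ZS.hdMul {U V : ℝ → Matrix (Fin 2) (Fin 2) ℂ} {U' V' : Matrix (Fin 2) (Fin 2) ℂ} {x : ℝ}
    (hU : ∀ i j, HasDerivAt (fun t => U t i j) (U' i j) x)
    (hV : ∀ i j, HasDerivAt (fun t => V t i j) (V' i j) x) (i j : Fin 2) :
    HasDerivAt (fun t => (U t * V t) i j) ((U' * V x + U x * V') i j) x := by
  simp only [Matrix.mul_apply, Fin.sum_univ_two, Matrix.add_apply]
  have h := (((hU i 0).mul (hV 0 j)).add ((hU i 1).mul (hV 1 j)))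
  exact h.congr_deriv (by ring)

lemma ZS.hdCMC (C D : Matrix (Fin 2) (Fin 2) ℂ) {Mf : ℝ → Matrix (Fin 2) (Fin 2) ℂ}
    {M' : Matrix (Fin 2) (Fin 2) ℂ} {x : ℝ}
    (h : ∀ i j, HasDerivAt (fun t => Mf t i j) (M' i j) x) (i j : Fin 2) :
    HasDerivAt (fun t => (C * Mf t * D) i j) ((C * M' * D) i j) x := by
  have h1 : ∀ i j, HasDerivAt (fun t => (C * Mf t) i j) ((C * M') i j) x := by
    intro i j
    have := ZS.hdMul (U := fun _ => C) (U' := 0) (fun i j => hasDerivAt_const x (C i j)) h i j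
    simpa using this
  have := ZS.hdMul (V := fun _ => D) (V' := 0) h1 (fun i j => hasDerivAt_const x (D i j)) i j
  simpa using this

/-- 2×2 adjugate. -/
def ZS.aadj (V : Matrix (Fin 2) (Fin 2) ℂ) : Matrix (Fin 2) (Fin 2) ℂ :=
  !![V 1 1, -V 0 1; -V 1 0, V 0 0]

/-- Key constancy lemma: for solutions of `M' = A M` with `trace A = 0`, `aadj (V x) * F x = 1`. -/
lemma ZS.aux_key (A V F : ℝ → Matrix (Fin 2) (Fin 2) ℂ)
    (htr : ∀ x, A x 1 1 = -(A x 0 0))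
    (hV : ∀ x i j, HasDerivAt (fun t => V t i j) ((A x * V x) i j) x)
    (hF : ∀ x i j, HasDerivAt (fun t => F t i j) ((A x * F x) i j) x)
    (hV0 : V 0 = 1) (hF0 : F 0 = 1) : ∀ x, ZS.aadj (V x) * F x = 1 := by
  have hW : ∀ x i j, HasDerivAt (fun t => ZS.aadj (V t) i j) ((ZS.aadj (V x) * (-(A x))) i j) x := by
    intro x i j
    have e : ZS.aadj (V x) * (-(A x)) =
        !![(A x * V x) 1 1, -((A x * V x) 0 1); -((A x * V x) 1 0), (A x * V x) 0 0] := by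
      ext i j
      fin_cases i <;> fin_cases j <;>
        simp [ZS.aadj, Matrix.mul_apply, Fin.sum_univ_two, htr x] <;> ring
    rw [e]
    fin_cases i <;> fin_cases j <;>
      simp only [ZS.aadj, Matrix.cons_val', Matrix.cons_val_zero, Matrix.cons_val_one,
        Matrix.head_cons, Matrix.head_fin_const, Matrix.empty_val',
        Matrix.cons_val_fin_one, Fin.isValue, Fin.mk_one, Fin.zero_eta]
    · exact hV x 1 1
    · exact (hV x 0 1).neg
    · exact (hV x 1 0).neg
    · exact hV x 0 0
  intro x
  have hconst : ∀ i j, (fun t => (ZS.aadj (V t) * F t) i j)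
      = fun _ => ((1 : Matrix (Fin 2) (Fin 2) ℂ)) i j := by
    intro i j
    have hd : ∀ t, HasDerivAt (fun t => (ZS.aadj (V t) * F t) i j) 0 t := by
      intro t
      have h := ZS.hdMul (hW t) (hF t) i j
      have e : (ZS.aadj (V t) * (-(A t)) * F t + ZS.aadj (V t) * (A t * F t)) = 0 := by
        simp [Matrix.mul_assoc, Matrix.neg_mul, Matrix.mul_neg]
      rw [e] at h
      simpa using h
    have hc : ∀ t, (ZS.aadj (V t) * F t) i j = (ZS.aadj (V 0) * F 0) i j := fun t =>
      is_const_of_deriv_eq_zero (fun s => (hd s).differentiableAt) (fun s => (hd s).deriv) t 0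
    funext t
    rw [hc t, hV0, hF0]
    simp [ZS.aadj, Matrix.one_fin_two]
  ext i j
  exact congrFun (hconst i j) x

/-- Uniqueness of fundamental solutions. -/
lemma ZS.uniq (A U V : ℝ → Matrix (Fin 2) (Fin 2) ℂ)
    (htr : ∀ x, A x 1 1 = -(A x 0 0))
    (hU : ∀ x i j, HasDerivAt (fun t => U t i j) ((A x * U x) i j) x)
    (hV : ∀ x i j, HasDerivAt (fun t => V t i j) ((A x * V x) i j) x)
    (hU0 : U 0 = 1) (hV0 : V 0 = 1) : ∀ x, U x = V x := by
  intro x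
  have h1 := ZS.aux_key A V U htr hV hU hV0 hU0 x
  have h2 := ZS.aux_key A V V htr hV hV hV0 hV0 x
  have h1' : U x * ZS.aadj (V x) = 1 := mul_eq_one_comm.mp h1
  calc U x = U x * (ZS.aadj (V x) * V x) := by rw [h2, mul_one]
    _ = (U x * ZS.aadj (V x)) * V x := by rw [Matrix.mul_assoc]
    _ = V x := by rw [h1', Matrix.one_mul]

theorem zs_discriminant_symmetries
    (lam : ℂ) (α : ℝ) (φm φp : ℝ → ℂ) (hm : Continuous φm) (hp : Continuous φp)
    (M NP NR NT : ℝ → Matrix (Fin 2) (Fin 2) ℂ)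
    (hM : IsZSFund lam φm φp M)
    (hNP : IsZSFund (-lam) φp φm NP)
    (hNR : IsZSFund lam (fun x => Complex.exp (I * α) * φm x)
                        (fun x => Complex.exp (-(I * α)) * φp x) NR)
    (hNT : IsZSFund (-lam) (fun x => φm (1 - x)) (fun x => φp (1 - x)) NT) :
    (NP 1).trace = (M 1).trace ∧
    (NR 1).trace = (M 1).trace ∧
    (NT 1).trace = (M 1).trace := by
  set A : ℝ → Matrix (Fin 2) (Fin 2) ℂ := fun x => !![-I * lam, I * φm x; -I * φp x, I * lam]
    with hA
  have htrA : ∀ x, A x 1 1 = -(A x 0 0) := by intro x; simp [hA]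
  -- (P) symmetry ---------------------------------------------------------
  have hP : (NP 1).trace = (M 1).trace := by
    set AP : ℝ → Matrix (Fin 2) (Fin 2) ℂ :=
      fun x => !![-I * (-lam), I * φp x; -I * φm x, I * (-lam)] with hAP
    have htrAP : ∀ x, AP x 1 1 = -(AP x 0 0) := by intro x; simp [hAP]
    set C : Matrix (Fin 2) (Fin 2) ℂ := !![0, 1; -1, 0] with hC
    set Ci : Matrix (Fin 2) (Fin 2) ℂ := !![0, -1; 1, 0] with hCi
    have hCCi : C * Ci = 1 := by
      ext i j; fin_cases i <;> fin_cases j <;>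
        simp [hC, hCi, Matrix.mul_apply, Fin.sum_univ_two, Matrix.one_apply]
    have hCiC : Ci * C = 1 := by
      ext i j; fin_cases i <;> fin_cases j <;>
        simp [hC, hCi, Matrix.mul_apply, Fin.sum_univ_two, Matrix.one_apply]
    have hCA : ∀ x, C * A x = AP x * C := by
      intro x
      ext i j; fin_cases i <;> fin_cases j <;>
        simp [hC, hA, hAP, Matrix.mul_apply, Fin.sum_univ_two] <;> ring
    have hG : ∀ x i j, HasDerivAt (fun t => (C * M t * Ci) i j)
        ((AP x * (C * M x * Ci)) i j) x := by
      intro x i j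
      have h := ZS.hdCMC C Ci (hM.2 x) i j
      have e : C * (A x * M x) * Ci = AP x * (C * M x * Ci) := by
        rw [← Matrix.mul_assoc, hCA x]
        simp only [Matrix.mul_assoc]
      rw [← e]
      exact h
    have hG0 : C * M 0 * Ci = 1 := by rw [hM.1, Matrix.mul_one, hCCi]
    have heq := ZS.uniq AP NP (fun t => C * M t * Ci) htrAP hNP.2 hG hNP.1 hG0 1
    rw [heq, Matrix.trace_mul_comm, ← Matrix.mul_assoc, hCiC, Matrix.one_mul]
  -- (R) symmetry ---------------------------------------------------------
  have hR : (NR 1).trace = (M 1).trace := by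
    set AR : ℝ → Matrix (Fin 2) (Fin 2) ℂ :=
      fun x => !![-I * lam, I * (Complex.exp (I * α) * φm x);
                  -I * (Complex.exp (-(I * α)) * φp x), I * lam] with hAR
    have htrAR : ∀ x, AR x 1 1 = -(AR x 0 0) := by intro x; simp [hAR]
    set c : ℂ := Complex.exp (I * α / 2) with hc
    set d : ℂ := Complex.exp (-(I * α / 2)) with hd
    have hcd : c * d = 1 := by rw [hc, hd, ← Complex.exp_add]; simp
    have hcc : c * c = Complex.exp (I * α) := by rw [hc, ← Complex.exp_add]; ring_nf
    have hdd : d * d = Complex.exp (-(I * α)) := by rw [hd, ← Complex.exp_add]; ring_nf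
    set D : Matrix (Fin 2) (Fin 2) ℂ := !![c, 0; 0, d] with hD
    set Di : Matrix (Fin 2) (Fin 2) ℂ := !![d, 0; 0, c] with hDi
    have hDDi : D * Di = 1 := by
      ext i j; fin_cases i <;> fin_cases j <;>
        simp [hD, hDi, Matrix.mul_apply, Fin.sum_univ_two, Matrix.one_apply, hcd] <;>
        linear_combination hcd
    have hDiD : Di * D = 1 := by
      ext i j; fin_cases i <;> fin_cases j <;>
        simp [hD, hDi, Matrix.mul_apply, Fin.sum_univ_two, Matrix.one_apply, hcd] <;>
        linear_combination hcd
    have hDA : ∀ x, D * A x = AR x * D := by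
      intro x
      have e1 : Complex.exp (I * (α : ℂ)) = c * c := hcc.symm
      have e2 : Complex.exp (-(I * (α : ℂ))) = d * d := hdd.symm
      ext i j
      fin_cases i <;> fin_cases j <;>
        simp [hD, hA, hAR, e1, e2, Matrix.mul_apply, Fin.sum_univ_two] <;>
        first
          | ring1
          | linear_combination (I * φm x * c) * hcd
          | linear_combination (-(I * φm x * c)) * hcd
          | linear_combination (I * φp x * d) * hcd
          | linear_combination (-(I * φp x * d)) * hcd
    have hG : ∀ x i j, HasDerivAt (fun t => (D * M t * Di) i j)
        ((AR x * (D * M x * Di)) i j) x := by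
      intro x i j
      have h := ZS.hdCMC D Di (hM.2 x) i j
      have e : D * (A x * M x) * Di = AR x * (D * M x * Di) := by
        rw [← Matrix.mul_assoc, hDA x]
        simp only [Matrix.mul_assoc]
      rw [← e]
      exact h
    have hG0 : D * M 0 * Di = 1 := by rw [hM.1, Matrix.mul_one, hDDi]
    have heq := ZS.uniq AR NR (fun t => D * M t * Di) htrAR hNR.2 hG hNR.1 hG0 1
    rw [heq, Matrix.trace_mul_comm, ← Matrix.mul_assoc, hDiD, Matrix.one_mul]
  -- (T) symmetry ---------------------------------------------------------
  have hT : (NT 1).trace = (M 1).trace := by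
    set AT : ℝ → Matrix (Fin 2) (Fin 2) ℂ :=
      fun x => !![-I * (-lam), I * φm (1 - x); -I * φp (1 - x), I * (-lam)] with hAT
    have htrAT : ∀ x, AT x 1 1 = -(AT x 0 0) := by intro x; simp [hAT]
    set S : Matrix (Fin 2) (Fin 2) ℂ := !![1, 0; 0, -1] with hS
    have hSS : S * S = 1 := by
      ext i j; fin_cases i <;> fin_cases j <;>
        simp [hS, Matrix.mul_apply, Fin.sum_univ_two, Matrix.one_apply]
    have hMadj : M 1 * ZS.aadj (M 1) = 1 :=
      mul_eq_one_comm.mp (ZS.aux_key A M M htrA (hM.2) (hM.2) hM.1 hM.1 1)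
    set Dc : Matrix (Fin 2) (Fin 2) ℂ := ZS.aadj (M 1) * S with hDc
    have hK : ∀ x i j, HasDerivAt (fun t => M (1 - t) i j)
        ((-(A (1 - x) * M (1 - x))) i j) x := by
      intro x i j
      have h := HasDerivAt.comp_const_sub 1 x (hM.2 (1 - x) i j)
      simpa only [Matrix.neg_apply] using h
    have hSA : ∀ x, S * (-(A (1 - x))) = AT x * S := by
      intro x
      ext i j; fin_cases i <;> fin_cases j <;>
        simp [hS, hA, hAT, Matrix.mul_apply, Fin.sum_univ_two] <;> ring
    have hG : ∀ x i j, HasDerivAt (fun t => (S * M (1 - t) * Dc) i j)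
        ((AT x * (S * M (1 - x) * Dc)) i j) x := by
      intro x i j
      have h := ZS.hdCMC S Dc (hK x) i j
      have e : S * (-(A (1 - x) * M (1 - x))) * Dc = AT x * (S * M (1 - x) * Dc) := by
        rw [← Matrix.neg_mul, ← Matrix.mul_assoc S (-(A (1 - x))) (M (1 - x)), hSA x]
        simp only [Matrix.mul_assoc]
      rw [← e]
      exact h
    have hG0 : S * M (1 - (0 : ℝ)) * Dc = 1 := by
      norm_num
      rw [hDc, Matrix.mul_assoc S, ← Matrix.mul_assoc (M 1), hMadj, Matrix.one_mul, hSS]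
    have heq := ZS.uniq AT NT (fun t => S * M (1 - t) * Dc) htrAT hNT.2 hG hNT.1 hG0 1
    have h1 : NT 1 = S * ZS.aadj (M 1) * S := by
      rw [heq]
      norm_num [hM.1, hDc, Matrix.mul_assoc]
    rw [h1, Matrix.trace_mul_comm, ← Matrix.mul_assoc, hSS, Matrix.one_mul]
    simp [ZS.aadj, Matrix.trace_fin_two]
    ring
  exact ⟨hP, hR, hT⟩
end

section
/- Let λ ∈ ℂ and let w : ℝ → ℂ be continuous. Let M₊ be the fundamental solution of the ZS system at (λ, (w, w)) and let M₋ be the fundamental solution of the ZS system at (-λ, (w, w)). Then trace(M₊(1)) = trace(M₋(1)); that is, for a potential φ with φ₋ = φ₊ the Zakharov–Shabat discriminant Δ(λ, φ) is an even function of λ. -/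
open Complex Matrix

private lemma const01 {f : ℝ → ℂ} (hf : ∀ x, HasDerivAt f 0 x) : f 1 = f 0 := by
  have : ∀ x y : ℝ, f x = f y := fun x y =>
    is_const_of_deriv_eq_zero (fun t => (hf t).differentiableAt)
      (fun t => (hf t).deriv) x y
  exact this 1 0

private lemma adj_mul_one (B Z W : ℝ → Matrix (Fin 2) (Fin 2) ℂ)
    (hB : ∀ x, B x 1 1 = - B x 0 0)
    (hZ0 : Z 0 = 1) (hW0 : W 0 = 1)
    (hZ : ∀ (x : ℝ) (i j : Fin 2), HasDerivAt (fun t => Z t i j) ((B x * Z x) i j) x)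
    (hW : ∀ (x : ℝ) (i j : Fin 2), HasDerivAt (fun t => W t i j) ((B x * W x) i j) x) :
    adjugate (Z 1) * W 1 = 1 := by
  have key : ∀ i j : Fin 2, (adjugate (Z 1) * W 1) i j = (adjugate (Z 0) * W 0) i j := by
    intro i j
    fin_cases i <;> fin_cases j
    · have h : ∀ x, HasDerivAt (fun t => Z t 1 1 * W t 0 0 - Z t 0 1 * W t 1 0) 0 x := by
        intro x
        convert ((hZ x 1 1).mul (hW x 0 0)).sub ((hZ x 0 1).mul (hW x 1 0)) using 1
        · rfl
        · rfl
        simp only [Matrix.mul_apply, Fin.sum_univ_two]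
        linear_combination (Z x 0 1 * W x 1 0 - Z x 1 1 * W x 0 0) * hB x
      have hc := const01 h
      simp [Matrix.adjugate_fin_two, Matrix.mul_apply, Fin.sum_univ_two]
      linear_combination hc
    · have h : ∀ x, HasDerivAt (fun t => Z t 1 1 * W t 0 1 - Z t 0 1 * W t 1 1) 0 x := by
        intro x
        convert ((hZ x 1 1).mul (hW x 0 1)).sub ((hZ x 0 1).mul (hW x 1 1)) using 1
        · rfl
        · rfl
        simp only [Matrix.mul_apply, Fin.sum_univ_two]
        linear_combination (Z x 0 1 * W x 1 1 - Z x 1 1 * W x 0 1) * hB x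
      have hc := const01 h
      simp [Matrix.adjugate_fin_two, Matrix.mul_apply, Fin.sum_univ_two]
      linear_combination hc
    · have h : ∀ x, HasDerivAt (fun t => Z t 0 0 * W t 1 0 - Z t 1 0 * W t 0 0) 0 x := by
        intro x
        convert ((hZ x 0 0).mul (hW x 1 0)).sub ((hZ x 1 0).mul (hW x 0 0)) using 1
        · rfl
        · rfl
        simp only [Matrix.mul_apply, Fin.sum_univ_two]
        linear_combination (Z x 1 0 * W x 0 0 - Z x 0 0 * W x 1 0) * hB x
      have hc := const01 h
      simp [Matrix.adjugate_fin_two, Matrix.mul_apply, Fin.sum_univ_two]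
      linear_combination hc
    · have h : ∀ x, HasDerivAt (fun t => Z t 0 0 * W t 1 1 - Z t 1 0 * W t 0 1) 0 x := by
        intro x
        convert ((hZ x 0 0).mul (hW x 1 1)).sub ((hZ x 1 0).mul (hW x 0 1)) using 1
        · rfl
        · rfl
        simp only [Matrix.mul_apply, Fin.sum_univ_two]
        linear_combination (Z x 1 0 * W x 0 1 - Z x 0 0 * W x 1 1) * hB x
      have hc := const01 h
      simp [Matrix.adjugate_fin_two, Matrix.mul_apply, Fin.sum_univ_two]
      linear_combination hc
  have : adjugate (Z 1) * W 1 = adjugate (Z 0) * W 0 := by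
    ext i j; exact key i j
  rw [this, hZ0, hW0, Matrix.adjugate_one, one_mul]

private lemma zs_sol_eq (B Z W : ℝ → Matrix (Fin 2) (Fin 2) ℂ)
    (hB : ∀ x, B x 1 1 = - B x 0 0)
    (hZ0 : Z 0 = 1) (hW0 : W 0 = 1)
    (hZ : ∀ (x : ℝ) (i j : Fin 2), HasDerivAt (fun t => Z t i j) ((B x * Z x) i j) x)
    (hW : ∀ (x : ℝ) (i j : Fin 2), HasDerivAt (fun t => W t i j) ((B x * W x) i j) x) :
    W 1 = Z 1 := by
  have h1 : adjugate (Z 1) * W 1 = 1 := adj_mul_one B Z W hB hZ0 hW0 hZ hW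
  have h2 : adjugate (Z 1) * Z 1 = 1 := adj_mul_one B Z Z hB hZ0 hZ0 hZ hZ
  have h3 : Z 1 * adjugate (Z 1) = 1 := mul_eq_one_comm.mp h2
  calc W 1 = (Z 1 * adjugate (Z 1)) * W 1 := by rw [h3, one_mul]
    _ = Z 1 * (adjugate (Z 1) * W 1) := by rw [mul_assoc]
    _ = Z 1 := by rw [h1, mul_one]

theorem zs_discriminant_even
    (lam : ℂ) (w : ℝ → ℂ) (hw : Continuous w)
    (Mp Mm : ℝ → Matrix (Fin 2) (Fin 2) ℂ)
    (hMp : IsZSFund lam w w Mp)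
    (hMm : IsZSFund (-lam) w w Mm) :
    (Mp 1).trace = (Mm 1).trace := by
  obtain ⟨hp0, hp⟩ := hMp
  obtain ⟨hm0, hm⟩ := hMm
  set N : ℝ → Matrix (Fin 2) (Fin 2) ℂ :=
    fun x => !![Mp x 1 1, -(Mp x 1 0); -(Mp x 0 1), Mp x 0 0] with hN
  have hN0 : N 0 = 1 := by
    ext i j
    fin_cases i <;> fin_cases j <;> simp [hN, hp0, Matrix.one_apply]
  have hNd : ∀ (x : ℝ) (i j : Fin 2), HasDerivAt (fun t => N t i j)
      ((!![-I * (-lam), I * w x; -I * w x, I * (-lam)] * N x) i j) x := by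
    intro x i j
    fin_cases i <;> fin_cases j
    · convert hp x 1 1 using 1
      all_goals simp [hN, Matrix.mul_apply, Fin.sum_univ_two]; try ring
    · convert (hp x 1 0).neg using 1
      · rfl
      · rfl
      all_goals simp [hN, Matrix.mul_apply, Fin.sum_univ_two]; try ring
    · convert (hp x 0 1).neg using 1
      · rfl
      · rfl
      all_goals simp [hN, Matrix.mul_apply, Fin.sum_univ_two]; try ring
    · convert hp x 0 0 using 1
      all_goals simp [hN, Matrix.mul_apply, Fin.sum_univ_two]; try ring
  have hB : ∀ x : ℝ, (!![-I * (-lam), I * w x; -I * w x, I * (-lam)] :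
      Matrix (Fin 2) (Fin 2) ℂ) 1 1 = - (!![-I * (-lam), I * w x; -I * w x, I * (-lam)] :
      Matrix (Fin 2) (Fin 2) ℂ) 0 0 := by
    intro x; simp; try ring
  have heq : Mm 1 = N 1 :=
    zs_sol_eq (fun x => !![-I * (-lam), I * w x; -I * w x, I * (-lam)]) N Mm hB hN0 hm0 hNd hm
  rw [Matrix.trace_fin_two, Matrix.trace_fin_two, heq]
  simp [hN]
  try ring
end

section
/- Let E be a complex Banach space and let p be an ℝ-submodule of E such that every x ∈ E can be written as x = a + i•b with a, b ∈ p. Let U ⊆ E be an open connected set with U ∩ p ≠ ∅, and let f : E → ℂ be analytic on U. If f(x) = 0 for every x ∈ U ∩ p, then f(x) = 0 for every x ∈ U. -/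
open Complex

/-- If `g : ℂ → ℂ` is analytic on a ball around `0` and vanishes at all small positive
real numbers, then it vanishes on the whole ball. -/
lemma aux_disk_vanish {g : ℂ → ℂ} {R δ : ℝ} (hR : 0 < R) (hδ : 0 < δ)
    (hg : AnalyticOnNhd ℂ g (Metric.ball 0 R))
    (h0 : ∀ s : ℝ, 0 < s → s < δ → g s = 0) :
    ∀ z ∈ Metric.ball (0 : ℂ) R, g z = 0 := by
  have hconn : IsPreconnected (Metric.ball (0 : ℂ) R) :=
    (convex_ball _ _).isPreconnected
  have h0mem : (0 : ℂ) ∈ Metric.ball (0 : ℂ) R := by simpa using hR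
  set ε := min δ R with hε
  have hεpos : 0 < ε := lt_min hδ hR
  -- a sequence of zeros tending to 0 within `≠ 0`
  have hfreq : ∃ᶠ z in nhdsWithin (0 : ℂ) {(0 : ℂ)}ᶜ, g z = 0 := by
    set u : ℕ → ℂ := fun n => ((ε / (n + 2) : ℝ) : ℂ) with hu
    have hupos : ∀ n : ℕ, (0 : ℝ) < ε / (n + 2) := by
      intro n
      positivity
    have hulim : Filter.Tendsto u Filter.atTop (nhdsWithin (0 : ℂ) {(0 : ℂ)}ᶜ) := by
      rw [tendsto_nhdsWithin_iff]
      constructor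
      · have : Filter.Tendsto (fun n : ℕ => (ε / (n + 2) : ℝ)) Filter.atTop (nhds 0) := by
          apply Filter.Tendsto.div_atTop (tendsto_const_nhds)
          exact Filter.tendsto_atTop_add_const_right _ 2 tendsto_natCast_atTop_atTop
        have := (Complex.continuous_ofReal.tendsto 0).comp this
        exact this
      · filter_upwards with n
        simp only [Set.mem_compl_iff, Set.mem_singleton_iff, hu]
        exact_mod_cast (hupos n).ne'
    apply hulim.frequently
    apply Filter.Frequently.of_forall
    intro n
    apply h0 _ (hupos n)
    calc ε / (n + 2) < ε := by
          apply div_lt_self hεpos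
          have : (0:ℝ) ≤ (n:ℝ) := Nat.cast_nonneg n
          linarith
      _ ≤ δ := min_le_left _ _
  have := hg.eqOn_zero_of_preconnected_of_frequently_eq_zero hconn h0mem hfreq
  intro z hz
  exact this hz

theorem analytic_vanish_on_real_subspace
    (E : Type*) [NormedAddCommGroup E] [NormedSpace ℂ E] [CompleteSpace E]
    (p : Submodule ℝ E)
    (hspan : ∀ x : E, ∃ a b : E, a ∈ p ∧ b ∈ p ∧ x = a + (Complex.I : ℂ) • b)
    (U : Set E) (hU : IsOpen U) (hUconn : IsConnected U)
    (hne : (U ∩ (p : Set E)).Nonempty)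
    (f : E → ℂ) (hf : AnalyticOnNhd ℂ f U)
    (hvanish : ∀ x ∈ U ∩ (p : Set E), f x = 0) :
    ∀ x ∈ U, f x = 0 := by
  obtain ⟨z₀, hz₀U, hz₀p⟩ := hne
  obtain ⟨r, hr, hball⟩ : ∃ r > 0, Metric.ball z₀ r ⊆ U :=
    Metric.isOpen_iff.1 hU z₀ hz₀U
  -- analyticity of affine maps composed with f
  have haff : ∀ (c b : E), ∀ t : ℂ, AnalyticAt ℂ (fun t : ℂ => c + t • b) t := by
    intro c b t
    exact analyticAt_const.add ((analyticAt_id).smul analyticAt_const)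
  -- Key step: f vanishes on the ball around z₀
  have key : ∀ x ∈ Metric.ball z₀ r, f x = 0 := by
    intro x hx
    obtain ⟨a, b, ha, hb, hab⟩ := hspan (x - z₀)
    set δ : ℝ := r / (‖a‖ + ‖b‖ + 1) with hδdef
    have hδ : 0 < δ := by positivity
    have hmem : ∀ s t : ℂ, ‖s‖ < δ → ‖t‖ < δ → z₀ + s • a + t • b ∈ Metric.ball z₀ r := by
      intro s t hs ht
      rw [Metric.mem_ball, dist_eq_norm]
      have : z₀ + s • a + t • b - z₀ = s • a + t • b := by abel
      rw [this]
      calc ‖s • a + t • b‖ ≤ ‖s‖ * ‖a‖ + ‖t‖ * ‖b‖ := by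
            refine (norm_add_le _ _).trans ?_
            rw [norm_smul, norm_smul]
        _ ≤ δ * ‖a‖ + δ * ‖b‖ := by
            gcongr
        _ < δ * (‖a‖ + ‖b‖ + 1) := by nlinarith
        _ = r := by
            rw [hδdef]
            field_simp
    have hmemU : ∀ s t : ℂ, ‖s‖ < δ → ‖t‖ < δ → z₀ + s • a + t • b ∈ U :=
      fun s t hs ht => hball (hmem s t hs ht)
    -- real points are in p
    have hmemp : ∀ s t : ℝ, z₀ + (s : ℂ) • a + (t : ℂ) • b ∈ (p : Set E) := by
      intro s t
      rw [Complex.coe_smul, Complex.coe_smul]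
      exact p.add_mem (p.add_mem hz₀p (p.smul_mem s ha)) (p.smul_mem t hb)
    -- Step 1: for real s small, f (z₀ + s•a + t•b) = 0 for all small complex t
    have step1 : ∀ s : ℝ, 0 < s → s < δ → ∀ t : ℂ, ‖t‖ < δ →
        f (z₀ + (s : ℂ) • a + t • b) = 0 := by
      intro s hs hsδ t ht
      have hsn : ‖(s : ℂ)‖ < δ := by
        rw [Complex.norm_real, Real.norm_eq_abs, abs_of_pos hs]; exact hsδ
      have hga : AnalyticOnNhd ℂ (fun t : ℂ => f (z₀ + (s : ℂ) • a + t • b))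
          (Metric.ball 0 δ) := by
        intro t' ht'
        rw [Metric.mem_ball, dist_zero_right] at ht'
        exact AnalyticAt.comp (g := f) (f := fun t : ℂ => z₀ + (s : ℂ) • a + t • b)
          (hf _ (hmemU _ _ hsn ht')) (haff (z₀ + (s : ℂ) • a) b t')
      have h0 : ∀ u : ℝ, 0 < u → u < δ → f (z₀ + (s : ℂ) • a + (u : ℂ) • b) = 0 := by
        intro u hu huδ
        apply hvanish
        have hun : ‖(u : ℂ)‖ < δ := by
          rw [Complex.norm_real, Real.norm_eq_abs, abs_of_pos hu]; exact huδ
        exact ⟨hmemU _ _ hsn hun, hmemp s u⟩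
      exact aux_disk_vanish hδ hδ hga h0 t (by rwa [Metric.mem_ball, dist_zero_right])
    -- Step 2: for all small complex s, t
    have step2 : ∀ s t : ℂ, ‖s‖ < δ → ‖t‖ < δ → f (z₀ + s • a + t • b) = 0 := by
      intro s t hs ht
      have hga : AnalyticOnNhd ℂ (fun s' : ℂ => f (z₀ + s' • a + t • b))
          (Metric.ball 0 δ) := by
        intro s' hs'
        rw [Metric.mem_ball, dist_zero_right] at hs'
        have : AnalyticAt ℂ (fun s' : ℂ => (z₀ + s' • a) + t • b) s' :=
          ((analyticAt_const.add ((analyticAt_id).smul analyticAt_const)).add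
            analyticAt_const)
        exact AnalyticAt.comp (g := f) (f := fun s' : ℂ => z₀ + s' • a + t • b)
          (hf _ (hmemU _ _ hs' ht)) this
      have h0 : ∀ u : ℝ, 0 < u → u < δ → f (z₀ + (u : ℂ) • a + t • b) = 0 :=
        fun u hu huδ => step1 u hu huδ t ht
      exact aux_disk_vanish hδ hδ hga h0 s (by rwa [Metric.mem_ball, dist_zero_right])
    -- Now use the line from z₀ to x
    by_cases hxz : x = z₀
    · subst hxz; exact hvanish x ⟨hz₀U, hz₀p⟩
    have hxn : 0 < ‖x - z₀‖ := by
      rw [norm_pos_iff]; intro h; apply hxz; rwa [sub_eq_zero] at h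
    set R : ℝ := r / ‖x - z₀‖ with hRdef
    have hR1 : 1 < R := by
      rw [hRdef, lt_div_iff₀ hxn, one_mul]
      rwa [Metric.mem_ball, dist_eq_norm] at hx
    have hR : 0 < R := lt_trans one_pos hR1
    have hlinU : ∀ ε : ℂ, ‖ε‖ < R → z₀ + ε • (x - z₀) ∈ U := by
      intro ε hε
      apply hball
      rw [Metric.mem_ball, dist_eq_norm]
      have : z₀ + ε • (x - z₀) - z₀ = ε • (x - z₀) := by abel
      rw [this, norm_smul]
      calc ‖ε‖ * ‖x - z₀‖ < R * ‖x - z₀‖ := by gcongr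
        _ = r := by rw [hRdef]; field_simp
    have hga : AnalyticOnNhd ℂ (fun ε : ℂ => f (z₀ + ε • (x - z₀)))
        (Metric.ball 0 R) := by
      intro ε hε
      rw [Metric.mem_ball, dist_zero_right] at hε
      exact AnalyticAt.comp (g := f) (f := fun ε : ℂ => z₀ + ε • (x - z₀))
        (hf _ (hlinU ε hε)) (haff z₀ (x - z₀) ε)
    have hdecomp : ∀ ε : ℂ, z₀ + ε • (x - z₀) = z₀ + ε • a + (ε * I) • b := by
      intro ε
      rw [hab, smul_add, smul_smul]
      abel
    have h0 : ∀ u : ℝ, 0 < u → u < δ → f (z₀ + (u : ℂ) • (x - z₀)) = 0 := by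
      intro u hu huδ
      rw [hdecomp]
      have hun : ‖(u : ℂ)‖ < δ := by
        rw [Complex.norm_real, Real.norm_eq_abs, abs_of_pos hu]; exact huδ
      have hun' : ‖(u : ℂ) * I‖ < δ := by
        rw [norm_mul, Complex.norm_I, mul_one]; exact hun
      exact step2 _ _ hun hun'
    have := aux_disk_vanish hR hδ hga h0 1 (by simpa [Metric.mem_ball] using hR1)
    simpa using this
  -- conclude by the identity theorem
  have heq : Set.EqOn f 0 U := by
    apply hf.eqOn_zero_of_preconnected_of_eventuallyEq_zero hUconn.isPreconnected hz₀U
    filter_upwards [Metric.ball_mem_nhds z₀ hr] with y hy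
    exact key y hy
  intro x hx
  exact heq hx
end

section
/- Let u : ℝ → ℂ be three times continuously differentiable and 1-periodic (u(x+1) = u(x) for all x ∈ ℝ). Then ∫₀¹ (u(x)·u'''(x) - 3·u(x)³·u'(x)) dx = 0. -/
private lemma deriv_periodic {f : ℝ → ℂ} (hf : ∀ x : ℝ, f (x + 1) = f x) :
    ∀ x : ℝ, deriv f (x + 1) = deriv f x := by
  intro x
  have : (fun y : ℝ => f (y + 1)) = f := funext hf
  rw [← deriv_comp_add_const f 1 x, this]

theorem S4_vanishes_on_diagonal
    (u : ℝ → ℂ) (hu : ContDiff ℝ 3 u)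
    (hper : ∀ x : ℝ, u (x + 1) = u x) :
    ∫ x in (0:ℝ)..1, (u x * iteratedDeriv 3 u x - 3 * u x ^ 3 * deriv u x) = 0 := by
  have h3 : ContDiff ℝ ((2 : ℕ∞) + 1) u := by norm_num; exact hu
  rw [contDiff_succ_iff_deriv] at h3
  obtain ⟨hd0, -, hc1⟩ := h3
  have h2 : ContDiff ℝ ((1 : ℕ∞) + 1) (deriv u) := by norm_num; exact hc1
  rw [contDiff_succ_iff_deriv] at h2
  obtain ⟨hd1, -, hc2⟩ := h2
  have hd2 : Differentiable ℝ (deriv (deriv u)) := hc2.differentiable (by simp)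
  have hcont3 : Continuous (deriv (deriv (deriv u))) := hc2.continuous_deriv le_rfl
  have hit : iteratedDeriv 3 u = deriv (deriv (deriv u)) := by
    rw [show (3 : ℕ) = 0 + 1 + 1 + 1 by rfl, iteratedDeriv_succ, iteratedDeriv_succ,
      iteratedDeriv_succ, iteratedDeriv_zero]
  set F : ℝ → ℂ := fun x => u x * deriv (deriv u) x - deriv u x * deriv u x / 2 -
      3 / 4 * (u x * u x * u x * u x) with hF
  have hder : ∀ x : ℝ, HasDerivAt F
      (u x * deriv (deriv (deriv u)) x - 3 * u x ^ 3 * deriv u x) x := by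
    intro x
    have h1 : HasDerivAt (fun x => u x * deriv (deriv u) x)
        (deriv u x * deriv (deriv u) x + u x * deriv (deriv (deriv u)) x) x :=
      (hd0 x).hasDerivAt.mul (hd2 x).hasDerivAt
    have h2 : HasDerivAt (fun x => deriv u x * deriv u x / 2)
        (deriv u x * deriv (deriv u) x) x := by
      have := ((hd1 x).hasDerivAt.mul (hd1 x).hasDerivAt).div_const 2
      convert this using 1
      · rfl
      · rfl
      ring
    have hu4 : HasDerivAt (fun x => u x * u x * u x * u x)
        (4 * u x ^ 3 * deriv u x) x := by
      have h := (hd0 x).hasDerivAt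
      have := ((h.mul h).mul h).mul h
      convert this using 1
      · rfl
      · rfl
      simp only [Pi.mul_apply]
      ring
    have h4 : HasDerivAt (fun x => (3 / 4 : ℂ) * (u x * u x * u x * u x))
        (3 * u x ^ 3 * deriv u x) x := by
      have := hu4.const_mul (3 / 4 : ℂ)
      convert this using 1
      · rfl
      ring
    have := (h1.sub h2).sub h4
    convert this using 1
    · rfl
    · rfl
    ring
  have hint : IntervalIntegrable
      (fun x => u x * deriv (deriv (deriv u)) x - 3 * u x ^ 3 * deriv u x)
      MeasureTheory.volume 0 1 := by
    apply Continuous.intervalIntegrable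
    fun_prop (disch := assumption)
  rw [hit]
  rw [intervalIntegral.integral_eq_sub_of_hasDerivAt (fun x _ => hder x) hint]
  have e0 : u 1 = u 0 := by simpa using hper 0
  have e1 : deriv u 1 = deriv u 0 := by simpa using deriv_periodic hper 0
  have e2 : deriv (deriv u) 1 = deriv (deriv u) 0 := by
    simpa using deriv_periodic (deriv_periodic hper) 0
  simp [hF, e0, e1, e2]
end
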